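/- Let b > 0, σ > 0, and u ∈ C¹([0,b], ℂ). Then ∫₀ᵇ |u'(t)|² dt + σ|u(0)|² + σ|u(b)|² ≥ (1/2)(b/2 + 1/(2σ))⁻² ∫₀ᵇ |u(t)|² dt. -/

import Mathlib

open MeasureTheory intervalIntegral Set

lemma robin_CS (g : ℝ → ℂ) (t : ℝ) (ht : 0 ≤ t)
    (hg : IntervalIntegrable (fun s => ‖g s‖) volume 0 t)
    (hg2 : IntervalIntegrable (fun s => ‖g s‖ ^ 2) volume 0 t) :
    (∫ s in (0:ℝ)..t, ‖g s‖) ^ 2 ≤ t * ∫ s in (0:ℝ)..t, ‖g s‖ ^ 2 := by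
  set X := ∫ s in (0:ℝ)..t, ‖g s‖ with hX
  set I := ∫ s in (0:ℝ)..t, ‖g s‖ ^ 2 with hI
  have hX0 : 0 ≤ X := intervalIntegral.integral_nonneg ht (fun s _ => norm_nonneg _)
  have hI0 : 0 ≤ I := intervalIntegral.integral_nonneg ht (fun s _ => sq_nonneg _)
  have key : ∀ r : ℝ, 0 < r → 2 * r * X ≤ r ^ 2 * I + t := by
    intro r hr
    have h1 : (∫ s in (0:ℝ)..t, 2 * r * ‖g s‖) ≤ ∫ s in (0:ℝ)..t, (r ^ 2 * ‖g s‖ ^ 2 + 1) := by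
      apply intervalIntegral.integral_mono_on ht (hg.const_mul _)
        ((hg2.const_mul _).add intervalIntegrable_const)
      intro x _
      nlinarith [sq_nonneg (r * ‖g x‖ - 1)]
    calc 2 * r * X = ∫ s in (0:ℝ)..t, 2 * r * ‖g s‖ := by
          rw [intervalIntegral.integral_const_mul]
      _ ≤ ∫ s in (0:ℝ)..t, (r ^ 2 * ‖g s‖ ^ 2 + 1) := h1
      _ = r ^ 2 * I + t := by
          rw [intervalIntegral.integral_add (hg2.const_mul _) intervalIntegrable_const,
            intervalIntegral.integral_const_mul, intervalIntegral.integral_const]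
          simp only [smul_eq_mul, mul_one, sub_zero]
          rw [hI]
  rcases eq_or_lt_of_le hX0 with hX0' | hX0'
  · nlinarith
  rcases eq_or_lt_of_le hI0 with hI0' | hI0'
  · exfalso
    have := key ((t + 1) / X) (by positivity)
    rw [← hI0'] at this
    have : 2 * ((t + 1) / X) * X = 2 * (t + 1) := by field_simp
    nlinarith [key ((t + 1) / X) (by positivity : (0:ℝ) < (t+1)/X)]
  · have h3 := key (X / I) (by positivity)
    have hIne : I ≠ 0 := ne_of_gt hI0'
    have h5 : 2 * X ^ 2 / I ≤ X ^ 2 / I + t := by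
      calc 2 * X ^ 2 / I = 2 * (X / I) * X := by ring
        _ ≤ (X / I) ^ 2 * I + t := h3
        _ = X ^ 2 / I + t := by field_simp
    have h6 := mul_le_mul_of_nonneg_right h5 (le_of_lt hI0')
    rw [div_mul_cancel₀ _ hIne, add_mul, div_mul_cancel₀ _ hIne] at h6
    linarith

lemma robin_half (b σ : ℝ) (hb : 0 < b) (hσ : 0 < σ) (u : ℝ → ℂ)
    (hu : ContDiffOn ℝ 1 u (Set.Icc 0 b)) :
    (∫ t in (0:ℝ)..(b/2), ‖u t‖ ^ 2) ≤
      (1/2) * (b/2 + 1/(2*σ)) ^ 2 *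
        (2*σ*‖u 0‖^2 + ∫ t in (0:ℝ)..(b/2), ‖derivWithin u (Set.Icc 0 b) t‖ ^ 2) := by
  set c : ℝ := 1/(2*σ) with hc_def
  have hc : 0 < c := by positivity
  set m : ℝ := b/2 with hm_def
  have hm0 : 0 ≤ m := by positivity
  have hmb : m ≤ b := by simp [hm_def]; linarith
  set g : ℝ → ℂ := derivWithin u (Set.Icc 0 b) with hg_def
  have hgc : ContinuousOn g (Set.Icc 0 b) :=
    hu.continuousOn_derivWithin (uniqueDiffOn_Icc hb) le_rfl
  have hsub : ∀ t ∈ Set.Icc (0:ℝ) b, Set.uIcc (0:ℝ) t ⊆ Set.Icc 0 b := fun t ht => by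
    rw [Set.uIcc_of_le ht.1]; exact Set.Icc_subset_Icc le_rfl ht.2
  have hgInt : ∀ t ∈ Set.Icc (0:ℝ) b, IntervalIntegrable (fun s => ‖g s‖) volume 0 t :=
    fun t ht => ((hgc.mono (hsub t ht)).norm).intervalIntegrable
  have hgInt2 : ∀ t ∈ Set.Icc (0:ℝ) b, IntervalIntegrable (fun s => ‖g s‖ ^ 2) volume 0 t :=
    fun t ht => (((hgc.mono (hsub t ht)).norm).pow 2).intervalIntegrable
  have hmIcc : m ∈ Set.Icc (0:ℝ) b := ⟨hm0, hmb⟩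
  -- FTC
  have hftc : ∀ t ∈ Set.Icc (0:ℝ) b, u t - u 0 = ∫ s in (0:ℝ)..t, g s := by
    intro t ht
    refine (intervalIntegral.integral_eq_sub_of_hasDeriv_right_of_le ht.1
      (hu.continuousOn.mono ?_) (fun x hx => ?_)
      ((hgc.mono (hsub t ht)).intervalIntegrable)).symm
    · exact Set.Icc_subset_Icc le_rfl ht.2
    · have hxm : x ∈ Set.Ioo (0:ℝ) b := ⟨hx.1, lt_of_lt_of_le hx.2 ht.2⟩
      have hdiff : DifferentiableWithinAt ℝ u (Set.Icc 0 b) x :=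
        hu.differentiableOn one_ne_zero x (Set.Ioo_subset_Icc_self hxm)
      exact (hdiff.hasDerivWithinAt.hasDerivAt
        (Icc_mem_nhds hxm.1 hxm.2)).hasDerivWithinAt
  set I : ℝ := ∫ s in (0:ℝ)..m, ‖g s‖ ^ 2 with hI_def
  have hI0 : 0 ≤ I := intervalIntegral.integral_nonneg hm0 (fun s _ => sq_nonneg _)
  set a : ℝ := ‖u 0‖ with ha_def
  have ha : 0 ≤ a := norm_nonneg _
  set C : ℝ := 2*σ*a^2 + I with hC_def
  have hC0 : 0 ≤ C := by positivity
  -- pointwise bound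
  have hpt : ∀ t ∈ Set.Icc (0:ℝ) m, ‖u t‖ ^ 2 ≤ (t + c) * C := by
    intro t ht
    have htb : t ∈ Set.Icc (0:ℝ) b := ⟨ht.1, ht.2.trans hmb⟩
    set X : ℝ := ∫ s in (0:ℝ)..t, ‖g s‖ with hX_def
    have hX0 : 0 ≤ X := intervalIntegral.integral_nonneg ht.1 (fun s _ => norm_nonneg _)
    have hXu : ‖u t‖ ≤ a + X := by
      have h1 : u t = u 0 + ∫ s in (0:ℝ)..t, g s := by
        rw [← hftc t htb]; ring
      calc ‖u t‖ = ‖u 0 + ∫ s in (0:ℝ)..t, g s‖ := by rw [← h1]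
        _ ≤ a + ‖∫ s in (0:ℝ)..t, g s‖ := norm_add_le _ _
        _ ≤ a + X := by
            gcongr
            exact intervalIntegral.norm_integral_le_integral_norm ht.1
    have hCS : X ^ 2 ≤ t * I := by
      refine le_trans (robin_CS g t ht.1 (hgInt t htb) (hgInt2 t htb)) ?_
      have : (∫ s in (0:ℝ)..t, ‖g s‖ ^ 2) ≤ I := by
        refine intervalIntegral.integral_mono_interval le_rfl ht.1 ht.2 ?_ (hgInt2 m hmIcc)
        filter_upwards with s using sq_nonneg _
      exact mul_le_mul_of_nonneg_left this ht.1
    have hu2 : ‖u t‖ ^ 2 ≤ (a + X) ^ 2 := by nlinarith [norm_nonneg (u t)]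
    have hsc : 2 * σ * c = 1 := by rw [hc_def]; field_simp
    rcases eq_or_lt_of_le ht.1 with h0 | h0
    · -- t = 0
      have hXz : X = 0 := by nlinarith
      rw [hC_def]
      nlinarith
    · have key2 : c * (a + X) ^ 2 ≤ (t + c) * (a ^ 2 + c * I) := by
        nlinarith [sq_nonneg (t*a - c*X),
          mul_nonneg (mul_nonneg h0.le hc.le) (sub_nonneg.2 hCS),
          mul_nonneg (mul_nonneg hc.le hc.le) (sub_nonneg.2 hCS), h0]
      have hconv : c * ((t + c) * C) = (t + c) * (a ^ 2 + c * I) := by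
        rw [hC_def]; linear_combination ((t + c) * a ^ 2) * hsc
      have : c * ‖u t‖ ^ 2 ≤ c * ((t + c) * C) := by
        rw [hconv]
        calc c * ‖u t‖ ^ 2 ≤ c * (a + X) ^ 2 := by nlinarith
          _ ≤ (t + c) * (a ^ 2 + c * I) := key2
      exact le_of_mul_le_mul_left this hc
  -- integrate
  have hint1 : IntervalIntegrable (fun t => ‖u t‖ ^ 2) volume 0 m :=
    (((hu.continuousOn.mono (hsub m hmIcc)).norm).pow 2).intervalIntegrable
  have hint2 : IntervalIntegrable (fun t => (t + c) * C) volume 0 m := by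
    apply Continuous.intervalIntegrable; fun_prop
  have h8 : (∫ t in (0:ℝ)..m, ‖u t‖ ^ 2) ≤ ∫ t in (0:ℝ)..m, (t + c) * C :=
    intervalIntegral.integral_mono_on hm0 hint1 hint2 hpt
  have h9 : (∫ t in (0:ℝ)..m, (t + c) * C) = (m^2/2 + c*m) * C := by
    rw [intervalIntegral.integral_mul_const,
      intervalIntegral.integral_add intervalIntegrable_id intervalIntegrable_const,
      integral_id, intervalIntegral.integral_const]
    simp only [smul_eq_mul, mul_one, sub_zero]
    ring
  calc (∫ t in (0:ℝ)..m, ‖u t‖ ^ 2) ≤ (m^2/2 + c*m) * C := by rw [← h9]; exact h8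
    _ ≤ (1/2) * (m + c)^2 * C := by
        apply mul_le_mul_of_nonneg_right _ hC0
        nlinarith [sq_nonneg c]

theorem robin_spectral_lower_bound (b σ : ℝ) (hb : 0 < b) (hσ : 0 < σ) (u : ℝ → ℂ)
    (hu : ContDiffOn ℝ 1 u (Set.Icc 0 b)) :
    (∫ t in (0:ℝ)..b, ‖deriv u t‖ ^ 2) + σ * ‖u 0‖ ^ 2 + σ * ‖u b‖ ^ 2 ≥
      (1 / 2) * ((b / 2 + 1 / (2 * σ)) ^ 2)⁻¹ * ∫ t in (0:ℝ)..b, ‖u t‖ ^ 2 := by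
  have hm0 : (0:ℝ) ≤ b/2 := by linarith
  have hmb : b/2 ≤ b := by linarith
  have hmltb : b/2 < b := by linarith
  set g : ℝ → ℂ := derivWithin u (Set.Icc 0 b) with hg_def
  have hgc : ContinuousOn g (Set.Icc 0 b) :=
    hu.continuousOn_derivWithin (uniqueDiffOn_Icc hb) le_rfl
  -- replace deriv by derivWithin in the integral
  have hae : ∀ᵐ x : ℝ ∂volume, x ≠ b := by
    rw [MeasureTheory.ae_iff]
    simp only [not_not, Set.setOf_eq_eq_singleton]
    exact Real.volume_singleton
  have e0 : (∫ t in (0:ℝ)..b, ‖deriv u t‖ ^ 2) = ∫ t in (0:ℝ)..b, ‖g t‖ ^ 2 := by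
    apply intervalIntegral.integral_congr_ae
    filter_upwards [hae] with x hx hxI
    rw [Set.uIoc_of_le hb.le] at hxI
    have hxo : x ∈ Set.Ioo (0:ℝ) b := ⟨hxI.1, lt_of_le_of_ne hxI.2 hx⟩
    rw [hg_def, derivWithin_of_mem_nhds (Icc_mem_nhds hxo.1 hxo.2)]
  -- the reflected function
  set v : ℝ → ℂ := fun t => u (b - t) with hv_def
  have hv : ContDiffOn ℝ 1 v (Set.Icc 0 b) := by
    apply hu.comp ((contDiff_const.sub contDiff_id).contDiffOn)
    intro t ht
    obtain ⟨h1, h2⟩ := ht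
    exact Set.mem_Icc.mpr ⟨by simp only [id]; linarith, by simp only [id]; linarith⟩
  have H1 := robin_half b σ hb hσ u hu
  have H2 := robin_half b σ hb hσ v hv
  have hv0 : v 0 = u b := by simp [hv_def]
  -- transfer the reflected integrals
  have e1 : (∫ t in (0:ℝ)..(b/2), ‖v t‖ ^ 2) = ∫ t in (b/2)..b, ‖u t‖ ^ 2 := by
    have := intervalIntegral.integral_comp_sub_left (a := (0:ℝ)) (b := b/2)
      (fun t => ‖u t‖ ^ 2) b
    have hb2 : b - b/2 = b/2 := by ring
    rw [hb2, sub_zero] at this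
    simpa [hv_def] using this
  have e2 : (∫ t in (0:ℝ)..(b/2), ‖derivWithin v (Set.Icc 0 b) t‖ ^ 2)
      = ∫ t in (b/2)..b, ‖g t‖ ^ 2 := by
    have hae2 : ∀ᵐ x : ℝ ∂volume, x ≠ b/2 := by
      rw [MeasureTheory.ae_iff]
      simp only [not_not, Set.setOf_eq_eq_singleton]
      exact Real.volume_singleton
    have step1 : (∫ t in (0:ℝ)..(b/2), ‖derivWithin v (Set.Icc 0 b) t‖ ^ 2)
        = ∫ t in (0:ℝ)..(b/2), ‖g (b - t)‖ ^ 2 := by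
      apply intervalIntegral.integral_congr_ae
      filter_upwards [hae2] with t htne htI
      rw [Set.uIoc_of_le hm0] at htI
      have hto : t ∈ Set.Ioo (0:ℝ) (b/2) := ⟨htI.1, lt_of_le_of_ne htI.2 htne⟩
      have htb : t ∈ Set.Ioo (0:ℝ) b := ⟨hto.1, hto.2.trans hmltb⟩
      have hbt : b - t ∈ Set.Ioo (0:ℝ) b := ⟨by linarith [hto.2], by linarith [hto.1]⟩
      have hU : HasDerivAt u (g (b - t)) (b - t) :=
        ((hu.differentiableOn one_ne_zero _ (Set.Ioo_subset_Icc_self hbt)).hasDerivWithinAt).hasDerivAt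
          (Icc_mem_nhds hbt.1 hbt.2)
      have hlin : HasDerivAt (fun s : ℝ => b - s) (-1) t := by
        simpa using (hasDerivAt_id t).const_sub b
      have hV : HasDerivAt v ((-1 : ℝ) • g (b - t)) t := hU.scomp t hlin
      rw [derivWithin_of_mem_nhds (Icc_mem_nhds htb.1 htb.2), hV.deriv]
      simp
    rw [step1]
    have := intervalIntegral.integral_comp_sub_left (a := (0:ℝ)) (b := b/2)
      (fun t => ‖g t‖ ^ 2) b
    have hb2 : b - b/2 = b/2 := by ring
    rw [hb2, sub_zero] at this
    simpa using this
  rw [e1] at H2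
  rw [e2, hv0] at H2
  -- integrability for splitting
  have hsub1 : Set.uIcc (0:ℝ) (b/2) ⊆ Set.Icc 0 b := by
    rw [Set.uIcc_of_le hm0]; exact Set.Icc_subset_Icc le_rfl hmb
  have hsub2 : Set.uIcc (b/2) b ⊆ Set.Icc 0 b := by
    rw [Set.uIcc_of_le hmb]; exact Set.Icc_subset_Icc hm0 le_rfl
  have hu1 : IntervalIntegrable (fun t => ‖u t‖ ^ 2) volume 0 (b/2) :=
    (((hu.continuousOn.mono hsub1).norm).pow 2).intervalIntegrable
  have hu2i : IntervalIntegrable (fun t => ‖u t‖ ^ 2) volume (b/2) b :=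
    (((hu.continuousOn.mono hsub2).norm).pow 2).intervalIntegrable
  have hg1 : IntervalIntegrable (fun t => ‖g t‖ ^ 2) volume 0 (b/2) :=
    (((hgc.mono hsub1).norm).pow 2).intervalIntegrable
  have hg2i : IntervalIntegrable (fun t => ‖g t‖ ^ 2) volume (b/2) b :=
    (((hgc.mono hsub2).norm).pow 2).intervalIntegrable
  have hsplit_u : (∫ t in (0:ℝ)..b, ‖u t‖ ^ 2)
      = (∫ t in (0:ℝ)..(b/2), ‖u t‖ ^ 2) + ∫ t in (b/2)..b, ‖u t‖ ^ 2 :=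
    (intervalIntegral.integral_add_adjacent_intervals hu1 hu2i).symm
  have hsplit_g : (∫ t in (0:ℝ)..b, ‖g t‖ ^ 2)
      = (∫ t in (0:ℝ)..(b/2), ‖g t‖ ^ 2) + ∫ t in (b/2)..b, ‖g t‖ ^ 2 :=
    (intervalIntegral.integral_add_adjacent_intervals hg1 hg2i).symm
  -- final arithmetic
  set A : ℝ := ∫ t in (0:ℝ)..(b/2), ‖u t‖ ^ 2 with hA
  set B : ℝ := ∫ t in (b/2)..b, ‖u t‖ ^ 2 with hB
  set I₁ : ℝ := ∫ t in (0:ℝ)..(b/2), ‖g t‖ ^ 2 with hI1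
  set I₂ : ℝ := ∫ t in (b/2)..b, ‖g t‖ ^ 2 with hI2
  have hI10 : 0 ≤ I₁ := intervalIntegral.integral_nonneg hm0 (fun s _ => sq_nonneg _)
  have hI20 : 0 ≤ I₂ := intervalIntegral.integral_nonneg hmb (fun s _ => sq_nonneg _)
  have ha0 : (0:ℝ) ≤ ‖u 0‖ ^ 2 := sq_nonneg _
  have hab0 : (0:ℝ) ≤ ‖u b‖ ^ 2 := sq_nonneg _
  set K : ℝ := (b/2 + 1/(2*σ)) ^ 2 with hK_def
  have hK : 0 < K := by positivity
  rw [ge_iff_le, e0, hsplit_u, hsplit_g]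
  calc (1/2) * K⁻¹ * (A + B)
      ≤ (1/2) * K⁻¹ * ((1/2) * K * (2*σ*‖u 0‖^2 + I₁) + (1/2) * K * (2*σ*‖u b‖^2 + I₂)) := by
        exact mul_le_mul_of_nonneg_left (add_le_add H1 H2) (by positivity)
    _ = (1/2) * (σ*‖u 0‖^2 + σ*‖u b‖^2) + (1/4) * (I₁ + I₂) := by
        field_simp
        ring
    _ ≤ (I₁ + I₂) + σ * ‖u 0‖ ^ 2 + σ * ‖u b‖ ^ 2 := by
        nlinarith [mul_nonneg hσ.le ha0, mul_nonneg hσ.le hab0]
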